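/- Let $\lambda_1, \dots, \lambda_n \ge 0$ with $\lambda_1 \ge n \ge 2$ and $\lambda_1 \ge \lambda_2 \ge \cdots \ge \lambda_n$, and suppose $\lambda_1 \lambda_i \le 1$ for $i \ge 2$. Then $\prod_{i=1}^n (1+\lambda_i^2) \le (1+\lambda_1^2)\left(1+\frac{1}{\lambda_1^2}\right)^{n-1} \le \left(1+\frac{1}{n^2}\right)^n \lambda_1^2 \le 2\lambda_1^2$. -/

import Mathlib

/-- if `λ₁ ≥ n ≥ 2`, `λ₁ ≥ λ₂ ≥ ⋯ ≥ λₙ ≥ 0` and `λ₁ λᵢ ≤ 1` for `i ≥ 2`,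
then `∏ (1+λᵢ²) ≤ (1+λ₁²)(1+1/λ₁²)^{n-1} ≤ (1+1/n²)ⁿ λ₁² ≤ 2λ₁²`. -/
theorem stmt_10 (n : ℕ) (hn : 2 ≤ n) (lam : Fin n → ℝ) (l1 : ℝ)
    (hl1 : l1 = lam ⟨0, by omega⟩)
    (hnn : ∀ i, 0 ≤ lam i)
    (hmono : ∀ i j : Fin n, i ≤ j → lam j ≤ lam i)
    (h1 : (n : ℝ) ≤ l1)
    (hpair : ∀ i : Fin n, i ≠ ⟨0, by omega⟩ → l1 * lam i ≤ 1) :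
    ∏ i, (1 + lam i ^ 2) ≤ (1 + l1 ^ 2) * (1 + 1 / l1 ^ 2) ^ (n - 1) ∧
    (1 + l1 ^ 2) * (1 + 1 / l1 ^ 2) ^ (n - 1) ≤ (1 + 1 / (n : ℝ) ^ 2) ^ n * l1 ^ 2 ∧
    (1 + 1 / (n : ℝ) ^ 2) ^ n * l1 ^ 2 ≤ 2 * l1 ^ 2 := by
  have hn2 : (2:ℝ) ≤ (n:ℝ) := by exact_mod_cast hn
  have hnpos : (0:ℝ) < (n:ℝ) := by linarith
  have hl1pos : (0:ℝ) < l1 := lt_of_lt_of_le hnpos h1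
  obtain ⟨m, rfl⟩ : ∃ m, n = m + 1 := ⟨n - 1, by omega⟩
  refine ⟨?_, ?_, ?_⟩
  · -- first inequality
    have key : ∀ i : Fin m, 1 + lam i.succ ^ 2 ≤ 1 + 1 / l1 ^ 2 := by
      intro i
      have h := hpair i.succ (Fin.succ_ne_zero i)
      have hle : lam i.succ ≤ 1 / l1 := by
        rw [le_div_iff₀ hl1pos]; linarith [h]
      have : lam i.succ ^ 2 ≤ (1 / l1) ^ 2 := by
        apply pow_le_pow_left₀ (hnn _) hle
      have h2 : (1 / l1) ^ 2 = 1 / l1 ^ 2 := by ring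
      linarith [this, h2 ▸ this]
    have h0 : lam (⟨0, by omega⟩ : Fin (m+1)) = lam 0 := rfl
    rw [h0] at hl1
    calc ∏ i, (1 + lam i ^ 2)
        = (1 + lam 0 ^ 2) * ∏ i : Fin m, (1 + lam i.succ ^ 2) :=
          Fin.prod_univ_succ _
      _ ≤ (1 + l1 ^ 2) * (1 + 1 / l1 ^ 2) ^ m := by
          rw [← hl1]
          apply mul_le_mul_of_nonneg_left ?_ (by positivity)
          calc ∏ i : Fin m, (1 + lam i.succ ^ 2)
              ≤ ∏ _i : Fin m, (1 + 1 / l1 ^ 2) :=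
                Finset.prod_le_prod (fun i _ => by positivity) (fun i _ => key i)
            _ = (1 + 1 / l1 ^ 2) ^ m := by
                rw [Finset.prod_const, Finset.card_univ, Fintype.card_fin]
      _ = (1 + l1 ^ 2) * (1 + 1 / l1 ^ 2) ^ (m + 1 - 1) := by norm_num
  · -- second
    have hstep : (1 + l1 ^ 2) * (1 + 1 / l1 ^ 2) ^ (m + 1 - 1)
        = (1 + 1 / l1 ^ 2) ^ (m + 1) * l1 ^ 2 := by
      have : (1 + l1 ^ 2) = l1 ^ 2 * (1 + 1 / l1 ^ 2) := by
        field_simp; ring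
      rw [this]
      simp only [Nat.add_sub_cancel, pow_succ]
      ring
    rw [hstep]
    apply mul_le_mul_of_nonneg_right ?_ (by positivity)
    apply pow_le_pow_left₀ (by positivity)
    have h3 : 1 / l1 ^ 2 ≤ 1 / ((m:ℝ)+1) ^ 2 := by
      apply one_div_le_one_div_of_le (by positivity)
      apply pow_le_pow_left₀ (by positivity)
      push_cast at h1 ⊢; linarith
    push_cast
    linarith
  · -- third
    have h2 : (1 + 1 / ((m:ℝ)+1) ^ 2) ^ (m+1) ≤ 2 := by
      have hx : (0:ℝ) < (m:ℝ)+1 := by positivity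
      have he : (1 + 1 / ((m:ℝ)+1) ^ 2) ≤ Real.exp (1 / ((m:ℝ)+1) ^ 2) := by
        have := Real.add_one_le_exp (1 / ((m:ℝ)+1) ^ 2)
        linarith
      have hp : (1 + 1 / ((m:ℝ)+1) ^ 2) ^ (m+1) ≤ Real.exp (1 / ((m:ℝ)+1) ^ 2) ^ (m+1) := by
        apply pow_le_pow_left₀ (by positivity) he
      rw [← Real.exp_nat_mul] at hp
      have hval : ((m:ℝ)+1) * (1 / ((m:ℝ)+1) ^ 2) = 1 / ((m:ℝ)+1) := by
        field_simp
      have hcast : ((m+1 : ℕ) : ℝ) = (m:ℝ)+1 := by push_cast; ring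
      rw [hcast, hval] at hp
      have hle : (1:ℝ) / ((m:ℝ)+1) ≤ 1/2 := by
        apply one_div_le_one_div_of_le (by norm_num)
        push_cast at hn2 ⊢; linarith
      have : Real.exp (1 / ((m:ℝ)+1)) ≤ Real.exp (1/2) := Real.exp_le_exp.mpr hle
      have hhalf : Real.exp (1/2) < 2 := by
        have hsq : Real.exp (1/2) ^ 2 = Real.exp 1 := by
          rw [← Real.exp_nat_mul]; norm_num
        nlinarith [Real.exp_one_lt_d9, Real.exp_pos (1/2 : ℝ), hsq]
      linarith
    push_cast at h2 ⊢
    nlinarith [sq_nonneg l1, h2]
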